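/- Let R be a positively graded Noetherian K-algebra and N a graded R-module such that there is a rational-function expression for the dimensions: dim_K N_{(k,j)} is given for j ≪ 0 by fixed polynomials in j as coefficients of a rational generating function in s of the form Q_j(s)/(1-s)^m with Q_j(s) = ∑_{r=0}^m B_r(j) s^r, B_r ∈ ℚ[j]. Then N is tame: there exists j_0 such that either N_j = 0 for all j ≤ j_0, or N_j ≠ 0 for all j ≤ j_0, where N_j = ⊕_k N_{(k,j)}. -/

import Mathlib

noncomputable section

/-- Let `R` be a positively graded Noetherian `K`-algebra and `N` a (bi)graded `R`-module,
with graded components `N_{(k,j)}` that are finite-dimensional `K`-vector spaces.  Suppose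
that for `j ≪ 0` the generating function `∑_k dim_K N_{(k,j)} s^k` has the rational form
`Q_j(s)/(1-s)^m` where `Q_j(s) = ∑_{r=0}^m B_r(j) s^r` with fixed polynomials
`B_r ∈ ℚ[j]`.  Then `N` is tame: there exists `j_0` such that either `N_j = ⊕_k N_{(k,j)}`
vanishes for all `j ≤ j_0`, or `N_j ≠ 0` for all `j ≤ j_0`. -/
theorem stmt_17 {K A M : Type*} [Field K] [CommRing A] [Algebra K A] [IsNoetherianRing A]
    (𝒜 : ℕ → Submodule K A) [GradedRing 𝒜]
    [AddCommGroup M] [Module A M] [Module K M] [IsScalarTower K A M]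
    (N : ℕ → ℤ → Submodule K M)
    (hgraded : ∀ (i : ℕ) (k : ℕ) (j : ℤ) (a : A) (x : M),
      a ∈ 𝒜 i → x ∈ N k j → a • x ∈ N (k + i) j)
    (hfin : ∀ k j, FiniteDimensional K (N k j))
    (m : ℕ) (B : ℕ → Polynomial ℚ)
    (hHilb : ∃ j₁ : ℤ, ∀ j : ℤ, j ≤ j₁ →
      (PowerSeries.mk fun k => ((Module.finrank K (N k j) : ℚ))) *
          (1 - PowerSeries.X) ^ m =
        ((∑ r ∈ Finset.range (m + 1),
          Polynomial.C ((B r).eval (j : ℚ)) * Polynomial.X ^ r : Polynomial ℚ) :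
            PowerSeries ℚ)) :
    ∃ j₀ : ℤ, (∀ j : ℤ, j ≤ j₀ → (⨆ k : ℕ, N k j) = ⊥) ∨
      (∀ j : ℤ, j ≤ j₀ → (⨆ k : ℕ, N k j) ≠ ⊥) := by
  obtain ⟨j₁, hH⟩ := hHilb
  have hXpow : ((1 : PowerSeries ℚ) - PowerSeries.X) ^ m ≠ 0 := by
    apply pow_ne_zero
    intro hc
    have := congrArg (PowerSeries.constantCoeff (R := ℚ)) hc
    simp at this
  by_cases hB : ∀ r ∈ Finset.range (m + 1), B r = 0
  · refine ⟨j₁, Or.inl fun j hj => ?_⟩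
    have h := hH j hj
    have hpoly : (∑ r ∈ Finset.range (m + 1),
        Polynomial.C ((B r).eval (j : ℚ)) * Polynomial.X ^ r : Polynomial ℚ) = 0 :=
      Finset.sum_eq_zero fun r hr => by rw [hB r hr]; simp
    rw [hpoly] at h
    have hmk : (PowerSeries.mk fun k => ((Module.finrank K (N k j) : ℚ))) = 0 := by
      simp only [Polynomial.coe_zero] at h
      exact (mul_eq_zero.mp h).resolve_right hXpow
    rw [eq_bot_iff, iSup_le_iff]
    intro k
    have hk : (Module.finrank K (N k j) : ℚ) = 0 := by
      have := congrArg (PowerSeries.coeff (R := ℚ) k) hmk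
      simpa using this
    have hk' : Module.finrank K (N k j) = 0 := by exact_mod_cast hk
    haveI := hfin k j
    rw [Submodule.finrank_eq_zero.mp hk']
  · push_neg at hB
    obtain ⟨r, hr, hBr⟩ := hB
    have hroots : {j : ℤ | (B r).eval (j : ℚ) = 0}.Finite := by
      have h1 : {x : ℚ | (B r).IsRoot x}.Finite := Polynomial.finite_setOf_isRoot hBr
      exact Set.Finite.preimage (fun a _ b _ h => by exact_mod_cast h) h1
    obtain ⟨b, hb⟩ := hroots.bddBelow
    refine ⟨min j₁ (b - 1), Or.inr fun j hj hbot => ?_⟩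
    have hj1 : j ≤ j₁ := le_trans hj (min_le_left _ _)
    have hjb : j ≤ b - 1 := le_trans hj (min_le_right _ _)
    have hjroot : (B r).eval (j : ℚ) ≠ 0 := by
      intro hc
      have : b ≤ j := hb hc
      omega
    -- the polynomial has a nonzero coefficient at r
    have hcoeff : (∑ r' ∈ Finset.range (m + 1),
        Polynomial.C ((B r').eval (j : ℚ)) * Polynomial.X ^ r' : Polynomial ℚ).coeff r
        = (B r).eval (j : ℚ) := by
      rw [Polynomial.finset_sum_coeff]
      rw [Finset.sum_eq_single r]
      · simp
      · intro r' _ hne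
        simp [Polynomial.coeff_X_pow, Ne.symm hne]
      · intro h; exact absurd hr h
    have hpne : ((∑ r' ∈ Finset.range (m + 1),
        Polynomial.C ((B r').eval (j : ℚ)) * Polynomial.X ^ r' : Polynomial ℚ) :
          PowerSeries ℚ) ≠ 0 := by
      intro hc
      have := congrArg (PowerSeries.coeff (R := ℚ) r) hc
      rw [Polynomial.coeff_coe, hcoeff] at this
      simp at this
      exact hjroot this
    have h := hH j hj1
    have hmk : (PowerSeries.mk fun k => ((Module.finrank K (N k j) : ℚ))) ≠ 0 := by
      intro hc
      rw [hc, zero_mul] at h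
      exact hpne h.symm
    -- get some k with nonzero finrank
    have : ∃ k, (Module.finrank K (N k j) : ℚ) ≠ 0 := by
      by_contra hall
      push_neg at hall
      apply hmk
      ext k
      simpa using hall k
    obtain ⟨k, hk⟩ := this
    have hk' : Module.finrank K (N k j) ≠ 0 := by exact_mod_cast hk
    haveI := hfin k j
    have hNne : N k j ≠ ⊥ := by
      intro hc
      apply hk'
      rw [hc]
      simp
    apply hNne
    rw [eq_bot_iff]
    calc N k j ≤ ⨆ k, N k j := le_iSup (fun k => N k j) k
    _ = ⊥ := hbot
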